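/- Assume λ_k < α ≤ β. Then there exists ρ > 0 such that ‖M_{α,β}(v)‖ ≤ ρ ‖v‖_{L²} for all v ∈ V₂. -/

import Mathlib

set_option maxHeartbeats 1000000


open MeasureTheory RealInnerProductSpace Filter Topology

/-- The functional `J_{α,β}(u) = ½(B(u,u) - α∫_Ω (u⁺)² - β∫_Ω (u⁻)²)`, where the Hilbert
space `X₀` carries the Gagliardo-type inner product `B = ⟪·,·⟫` and `T : X₀ → L²(Ω)` is the
embedding into `L²(Ω)`; note `∫_Ω (u⁺)² = ‖(Tu)⁺‖²_{L²}`. -/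
noncomputable def Jfun {Ω : Type*} [MeasurableSpace Ω] {μ : Measure Ω}
    {X₀ : Type*} [NormedAddCommGroup X₀] [InnerProductSpace ℝ X₀]
    (T : X₀ →ₗ[ℝ] Lp ℝ 2 μ) (α β : ℝ) (u : X₀) : ℝ :=
  (⟪u, u⟫ - α * ‖Lp.posPart (T u)‖ ^ 2 - β * ‖Lp.negPart (T u)‖ ^ 2) / 2

lemma posPart_sub_negPart_aux {α : Type*} [MeasurableSpace α] {μ : Measure α}
    (f : Lp ℝ 2 μ) : Lp.posPart f - Lp.negPart f = f := by
  apply Lp.ext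
  filter_upwards [Lp.coeFn_posPart f, Lp.coeFn_negPart f,
    Lp.coeFn_sub (Lp.posPart f) (Lp.negPart f)] with a h1 h2 h3
  rw [h3, Pi.sub_apply, h1, h2]
  rcases le_total (f a) 0 with h | h
  · rw [max_eq_right h, min_eq_left h]; ring
  · rw [max_eq_left h, min_eq_right h]; ring

lemma inner_posPart_negPart_aux {α : Type*} [MeasurableSpace α] {μ : Measure α}
    (f : Lp ℝ 2 μ) : ⟪Lp.posPart f, Lp.negPart f⟫ = 0 := by
  rw [L2.inner_def]
  apply integral_eq_zero_of_ae
  filter_upwards [Lp.coeFn_posPart f, Lp.coeFn_negPart f] with a h1 h2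
  show (inner ℝ (Lp.posPart f a) (Lp.negPart f a) : ℝ) = 0
  rw [RCLike.inner_apply, starRingEnd_apply, star_trivial, h1, h2]
  rcases le_total (f a) 0 with h | h
  · rw [max_eq_right h, min_eq_left h]; ring
  · rw [max_eq_left h, min_eq_right h]; ring

lemma norm_sq_eq_posPart_add_negPart {α : Type*} [MeasurableSpace α] {μ : Measure α}
    (f : Lp ℝ 2 μ) : ‖f‖ ^ 2 = ‖Lp.posPart f‖ ^ 2 + ‖Lp.negPart f‖ ^ 2 := by
  have h := norm_sub_sq_real (Lp.posPart f) (Lp.negPart f)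
  rw [posPart_sub_negPart_aux f, inner_posPart_negPart_aux f] at h
  linarith

lemma aux_key {α β nu nv nuv tu tv tuv P N Pv Nv : ℝ}
    (hA0 : 0 < α) (hAB : α ≤ β)
    (hnsq : nuv = nu + nv) (hTnsq : tuv = tu + tv)
    (hd1 : tuv = P + N) (hd2 : tv = Pv + Nv)
    (hN : 0 ≤ N) (hPv : 0 ≤ Pv)
    (h0 : (nv - α * Pv - β * Nv) / 2 ≤ (nuv - α * P - β * N) / 2) :
    α * tu - nu ≤ (β - α) * tv := by
  nlinarith [mul_nonneg (by linarith : (0:ℝ) ≤ β - α) hN,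
    mul_nonneg (by linarith : (0:ℝ) ≤ β - α) hPv]

lemma aux_arith {lk α β a b c : ℝ} (hlk0 : 0 < lk) (hA : lk < α)
    (hkey : α * b - a ≤ (β - α) * c) (hV1 : a ≤ lk * b) :
    a * (α - lk) ≤ lk * (β - α) * c := by nlinarith

lemma aux_final {x y C : ℝ} (hy : 0 ≤ y) (h : x ≤ Real.sqrt C * y) :
    x ≤ (Real.sqrt C + 1) * y := by nlinarith [Real.sqrt_nonneg C]

theorem stmt_6
    {n : ℕ} {s : ℝ} (hs0 : 0 < s) (hs1 : s < 1) (hns : 2 * s < (n : ℝ))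
    {Ωs : Set (EuclideanSpace ℝ (Fin n))} (hΩb : Bornology.IsBounded Ωs)
    (hΩm : MeasurableSet Ωs)
    {K : EuclideanSpace ℝ (Fin n) → ℝ} (hKpos : ∀ x, x ≠ 0 → 0 < K x)
    (hK1 : Integrable (fun x => min (‖x‖ ^ 2) 1 * K x))
    (hK2 : ∃ lam > 0, ∀ x, x ≠ 0 → lam * ‖x‖ ^ (-((n : ℝ) + 2 * s)) ≤ K x)
    (hK3 : ∀ x, K (-x) = K x)
    {X₀ : Type*} [NormedAddCommGroup X₀] [InnerProductSpace ℝ X₀] [CompleteSpace X₀]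
    (T : X₀ →ₗ[ℝ] Lp ℝ 2 (volume.restrict Ωs)) (hT : Function.Injective T)
    {lk lk1 : ℝ} (hlk0 : 0 < lk) (hlk : lk < lk1)
    (V₁ V₂ : Submodule ℝ X₀) [FiniteDimensional ℝ V₁]
    (hV₂ : ∀ v : X₀, v ∈ V₂ ↔ ∀ u ∈ V₁, ⟪u, v⟫ = 0 ∧ ⟪T u, T v⟫ = 0)
    (hcompl : IsCompl V₁ V₂)
    (hV₁b : ∀ u ∈ V₁, ⟪u, u⟫ ≤ lk * ‖T u‖ ^ 2)
    (hV₂b : ∀ v ∈ V₂, lk1 * ‖T v‖ ^ 2 ≤ ⟪v, v⟫)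
    (lam1 : ℝ) (hlam1 : 0 < lam1)
    (hPoin : ∀ u : X₀, lam1 * ‖T u‖ ^ 2 ≤ ⟪u, u⟫)
    {α β : ℝ} (hA : lk < α) (hAB : α ≤ β)
    (M : V₂ → V₁)
    (hM : ∀ (v : V₂) (u : V₁),
      Jfun T α β ((u : X₀) + (v : X₀)) ≤ Jfun T α β ((M v : X₀) + (v : X₀)))
    :
    ∃ ρ > 0, ∀ v : V₂, ‖(M v : X₀)‖ ≤ ρ * ‖T (v : X₀)‖ := by
  set C : ℝ := lk * (β - α) / (α - lk) with hC
  have hC0 : 0 ≤ C := by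
    apply div_nonneg
    · nlinarith
    · linarith
  refine ⟨Real.sqrt C + 1, by positivity, fun v => ?_⟩
  set u : X₀ := (M v : X₀) with hu
  have hv2 := (hV₂ (v : X₀)).mp v.2
  have horth := hv2 u (M v).2
  have h0 := hM v 0
  simp only [ZeroMemClass.coe_zero, zero_add] at h0
  -- norms
  have hnsq : ‖u + (v : X₀)‖ ^ 2 = ‖u‖ ^ 2 + ‖(v : X₀)‖ ^ 2 := by
    rw [norm_add_sq_real, horth.1]; ring
  have hTnsq : ‖T (u + (v : X₀))‖ ^ 2 = ‖T u‖ ^ 2 + ‖T (v : X₀)‖ ^ 2 := by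
    rw [map_add, norm_add_sq_real, horth.2]; ring
  -- decompositions of L² norms
  have hdecomp1 := norm_sq_eq_posPart_add_negPart (T (u + (v : X₀)))
  have hdecomp2 := norm_sq_eq_posPart_add_negPart (T (v : X₀))
  -- unfold Jfun
  rw [Jfun, Jfun, real_inner_self_eq_norm_sq, real_inner_self_eq_norm_sq] at h0
  have hneg1 : (0 : ℝ) ≤ ‖Lp.negPart (T (u + (v : X₀)))‖ ^ 2 := by positivity
  have hpos2 : (0 : ℝ) ≤ ‖Lp.posPart (T (v : X₀))‖ ^ 2 := by positivity
  -- key inequality: α‖Tu‖² - ‖u‖² ≤ (β-α)‖Tv‖²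
  have hkey : α * ‖T u‖ ^ 2 - ‖u‖ ^ 2 ≤ (β - α) * ‖T (v : X₀)‖ ^ 2 :=
    aux_key (by linarith) hAB hnsq hTnsq hdecomp1 hdecomp2 hneg1 hpos2 h0
  have hV1u := hV₁b u (M v).2
  rw [real_inner_self_eq_norm_sq] at hV1u
  -- conclude ‖u‖² ≤ C ‖Tv‖²
  have hfinal : ‖u‖ ^ 2 ≤ C * ‖T (v : X₀)‖ ^ 2 := by
    rw [hC, div_mul_eq_mul_div, le_div_iff₀ (by linarith)]
    exact aux_arith hlk0 hA hkey hV1u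
  have h1 : ‖u‖ ^ 2 ≤ (Real.sqrt C * ‖T (v : X₀)‖) ^ 2 := by
    rw [mul_pow, Real.sq_sqrt hC0]
    exact hfinal
  have h2 : ‖u‖ ≤ Real.sqrt C * ‖T (v : X₀)‖ := by
    have := Real.sqrt_le_sqrt h1
    rwa [Real.sqrt_sq (norm_nonneg u),
      Real.sqrt_sq (by positivity)] at this
  exact aux_final (norm_nonneg _) h2
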